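/- Let 0 < R₁ < R₂ and t ∈ [0,1]. Consider the 4×4 complex matrix B(t,R₁,R₂) with rows (0, −1/R₁ − 1, 0, t/R₁), (1/R₁ + 1, 0, −t/R₁, 0), (0, t/R₂, 0, −t/R₂ − 1), (−t/R₂, 0, t/R₂ + 1, 0). Then there exist real numbers α, β with α > 0, β > 0 and α ≠ β such that the eigenvalues of B(t,R₁,R₂) are exactly the four distinct purely imaginary numbers iα, −iα, iβ, −iβ. (Hence the fixed point p₊,₊ of the (b-)coupled angular momenta is a non-degenerate fixed point of elliptic-elliptic type for every t ∈ [0,1].) -/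

import Mathlib

open Polynomial Complex

theorem my_det_fin_four {R : Type*} [CommRing R] (A : Matrix (Fin 4) (Fin 4) R) :
    A.det =
      A 0 0 * (A 1 1*(A 2 2*A 3 3 - A 2 3*A 3 2) - A 1 2*(A 2 1*A 3 3 - A 2 3*A 3 1)
        + A 1 3*(A 2 1*A 3 2 - A 2 2*A 3 1))
      - A 0 1 * (A 1 0*(A 2 2*A 3 3 - A 2 3*A 3 2) - A 1 2*(A 2 0*A 3 3 - A 2 3*A 3 0)
        + A 1 3*(A 2 0*A 3 2 - A 2 2*A 3 0))
      + A 0 2 * (A 1 0*(A 2 1*A 3 3 - A 2 3*A 3 1) - A 1 1*(A 2 0*A 3 3 - A 2 3*A 3 0)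
        + A 1 3*(A 2 0*A 3 1 - A 2 1*A 3 0))
      - A 0 3 * (A 1 0*(A 2 1*A 3 2 - A 2 2*A 3 1) - A 1 1*(A 2 0*A 3 2 - A 2 2*A 3 0)
        + A 1 2*(A 2 0*A 3 1 - A 2 1*A 3 0)) := by
  rw [Matrix.det_succ_row_zero]
  simp [Fin.sum_univ_succ, Matrix.det_fin_three, Matrix.submatrix_apply, Fin.succAbove]
  have h1 : (Fin.succ 2 : Fin 4) = 3 := rfl
  have h2 : ((2 : Fin 3).castSucc : Fin 4) = 2 := rfl
  ring

set_option maxHeartbeats 1600000 in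
/-- For every `t ∈ [0,1]`, the linearization of the (b-)coupled angular
momenta at the fixed point `p₊,₊` has four distinct purely imaginary
eigenvalues `±iα, ±iβ` with `α, β > 0`, `α ≠ β`: the point is a non-degenerate
fixed point of elliptic-elliptic type. -/
theorem bCAM_p_plus_plus_elliptic_elliptic (R₁ R₂ t : ℝ)
    (hR₁ : 0 < R₁) (hR₁₂ : R₁ < R₂) (ht : t ∈ Set.Icc (0 : ℝ) 1) :
    let B : Matrix (Fin 4) (Fin 4) ℂ :=
      !![0, ((-1 / R₁ - 1 : ℝ) : ℂ), 0, ((t / R₁ : ℝ) : ℂ);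
         ((1 / R₁ + 1 : ℝ) : ℂ), 0, ((-t / R₁ : ℝ) : ℂ), 0;
         0, ((t / R₂ : ℝ) : ℂ), 0, ((-t / R₂ - 1 : ℝ) : ℂ);
         ((-t / R₂ : ℝ) : ℂ), 0, ((t / R₂ + 1 : ℝ) : ℂ), 0]
    ∃ α β : ℝ, 0 < α ∧ 0 < β ∧ α ≠ β ∧
      List.Pairwise (· ≠ ·)
        [I * (α : ℂ), -(I * (α : ℂ)), I * (β : ℂ), -(I * (β : ℂ))] ∧
      B.charpoly =
        (X - C (I * (α : ℂ))) * (X - C (-(I * (α : ℂ)))) *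
          (X - C (I * (β : ℂ))) * (X - C (-(I * (β : ℂ)))) := by
  intro B
  obtain ⟨ht0, ht1⟩ := ht
  have hR₂ : 0 < R₂ := hR₁.trans hR₁₂
  set P : ℝ := (1/R₁+1)^2 + (t/R₂+1)^2 + 2*(t/R₁)*(t/R₂) with hP
  clear_value P
  set Qv : ℝ := ((1/R₁+1)*(t/R₂+1) - (t/R₁)*(t/R₂))^2 with hQ
  clear_value Qv
  set D : ℝ := P^2 - 4*Qv with hD
  clear_value D
  have hb : 0 ≤ t/R₁ := by positivity
  have hc : 0 ≤ t/R₂ := by positivity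
  have hbc : 0 ≤ (t/R₁)*(t/R₂) := mul_nonneg hb hc
  have hPpos : 0 < P := by
    have h1 : 0 < (1/R₁+1)^2 := by positivity
    have h2 : 0 < (t/R₂+1)^2 := by positivity
    rw [hP]; nlinarith
  have hkey : (1/R₁+1)*(t/R₂+1) - (t/R₁)*(t/R₂)
      = (t*(1-t))/(R₁*R₂) + 1/R₁ + t/R₂ + 1 := by
    field_simp; ring
  have hQbase : 0 < (1/R₁+1)*(t/R₂+1) - (t/R₁)*(t/R₂) := by
    rw [hkey]
    have h1 : 0 ≤ (t*(1-t))/(R₁*R₂) :=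
      div_nonneg (mul_nonneg ht0 (by linarith)) (by positivity)
    have h2 : 0 < 1/R₁ := by positivity
    linarith
  have hQpos : 0 < Qv := by rw [hQ]; positivity
  have hDpos : 0 < D := by
    have hfac : D = (((1/R₁+1) - (t/R₂+1))^2 + 4*((t/R₁)*(t/R₂)))
        * ((1/R₁+1)+(t/R₂+1))^2 := by rw [hD, hP, hQ]; ring
    have h2 : 0 < ((1/R₁+1)+(t/R₂+1))^2 := by positivity
    have h1 : 0 < ((1/R₁+1) - (t/R₂+1))^2 + 4*((t/R₁)*(t/R₂)) := by
      rcases eq_or_lt_of_le ht0 with h | h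
      · have e1 : (1/R₁+1) - (t/R₂+1) = 1/R₁ := by rw [← h]; ring
        have e2 : 4*((t/R₁)*(t/R₂)) = 0 := by rw [← h]; ring
        rw [e1, e2]
        have : 0 < (1/R₁)^2 := by positivity
        linarith
      · have : 0 < 4*((t/R₁)*(t/R₂)) := by positivity
        nlinarith [sq_nonneg ((1/R₁+1) - (t/R₂+1))]
    rw [hfac]; exact mul_pos h1 h2
  set s : ℝ := Real.sqrt D with hsdef
  have hs0 : 0 < s := Real.sqrt_pos.mpr hDpos
  have hs2 : s^2 = D := Real.sq_sqrt hDpos.le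
  clear_value s
  have hsP : s < P := by nlinarith
  set α : ℝ := Real.sqrt ((P+s)/2) with hadef
  set β : ℝ := Real.sqrt ((P-s)/2) with hbdef
  have hμ₁ : 0 < (P+s)/2 := by linarith
  have hμ₂ : 0 < (P-s)/2 := by linarith
  have hα : 0 < α := Real.sqrt_pos.mpr hμ₁
  have hβ : 0 < β := Real.sqrt_pos.mpr hμ₂
  have hα2 : α^2 = (P+s)/2 := Real.sq_sqrt hμ₁.le
  have hβ2 : β^2 = (P-s)/2 := Real.sq_sqrt hμ₂.le
  clear_value α β
  have hαβ : α ≠ β := by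
    intro h; rw [h] at hα2; rw [hα2] at hβ2; linarith
  have hsum : α^2 + β^2 = (1/R₁+1)^2 + (t/R₂+1)^2 + 2*(t/R₁)*(t/R₂) := by
    rw [hα2, hβ2]; linear_combination hP
  have hprod : α^2 * β^2 = ((1/R₁+1)*(t/R₂+1) - (t/R₁)*(t/R₂))^2 := by
    rw [hα2, hβ2]
    linear_combination (-1/4 : ℝ) * hs2 + (-1/4 : ℝ) * hD + hQ
  have hsumC : (α:ℂ)^2 + (β:ℂ)^2
      = (1/(R₁:ℂ)+1)^2 + ((t:ℂ)/(R₂:ℂ)+1)^2 + 2*((t:ℂ)/(R₁:ℂ))*((t:ℂ)/(R₂:ℂ)) := by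
    exact_mod_cast congrArg (Complex.ofReal) hsum
  have hprodC : (α:ℂ)^2 * (β:ℂ)^2
      = ((1/(R₁:ℂ)+1)*((t:ℂ)/(R₂:ℂ)+1) - ((t:ℂ)/(R₁:ℂ))*((t:ℂ)/(R₂:ℂ)))^2 := by
    exact_mod_cast congrArg (Complex.ofReal) hprod
  have key : ∀ u v : ℝ, I*(u:ℂ) = I*(v:ℂ) → u = v := fun u v h =>
    ofReal_inj.mp (mul_left_cancel₀ I_ne_zero h)
  refine ⟨α, β, hα, hβ, hαβ, ?_, ?_⟩
  · have k1 : I*(α:ℂ) ≠ -(I*(α:ℂ)) := by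
      intro h
      have := key α (-α) (by push_cast; linear_combination h)
      linarith
    have k2 : I*(α:ℂ) ≠ I*(β:ℂ) := fun h => hαβ (key _ _ h)
    have k3 : I*(α:ℂ) ≠ -(I*(β:ℂ)) := by
      intro h
      have := key α (-β) (by push_cast; linear_combination h)
      linarith
    have k4 : -(I*(α:ℂ)) ≠ I*(β:ℂ) := by
      intro h
      have := key (-α) β (by push_cast; linear_combination h)
      linarith
    have k5 : -(I*(α:ℂ)) ≠ -(I*(β:ℂ)) := by
      intro h
      have := key (-α) (-β) (by push_cast; linear_combination h)
      exact hαβ (by linarith)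
    have k6 : I*(β:ℂ) ≠ -(I*(β:ℂ)) := by
      intro h
      have := key β (-β) (by push_cast; linear_combination h)
      linarith
    simp [List.pairwise_cons, k1, k2, k3, k4, k5, k6]
  · apply Polynomial.funext
    intro z
    rw [Matrix.charpoly, eval_det, matPolyEquiv_eval_eq_map]
    have hM : (Matrix.charmatrix B).map (eval z) =
        !![z, -((-1 / R₁ - 1 : ℝ) : ℂ), 0, -((t / R₁ : ℝ) : ℂ);
           -((1 / R₁ + 1 : ℝ) : ℂ), z, -((-t / R₁ : ℝ) : ℂ), 0;
           0, -((t / R₂ : ℝ) : ℂ), z, -((-t / R₂ - 1 : ℝ) : ℂ);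
           -((-t / R₂ : ℝ) : ℂ), 0, -((t / R₂ + 1 : ℝ) : ℂ), z] := by
      ext i j
      fin_cases i <;> fin_cases j <;>
        simp [Matrix.charmatrix_apply, Matrix.one_apply, B]
    rw [hM, my_det_fin_four]
    simp only [Matrix.cons_val', Matrix.cons_val_zero, Matrix.cons_val_one,
      Matrix.head_cons, Matrix.empty_val', Matrix.cons_val_fin_one,
      Matrix.cons_val_two, Matrix.cons_val_three, Matrix.tail_cons, Matrix.head_fin_const,
      Matrix.of_apply, Matrix.vecHead, Matrix.vecTail, Function.comp_apply, Fin.succ_zero_eq_one,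
      Fin.succ_one_eq_two, eval_mul, eval_sub, eval_add, eval_neg, eval_X, eval_C, eval_one]
    push_cast
    have hI : (I:ℂ)^2 = -1 := Complex.I_sq
    linear_combination (-z^2) * hsumC - hprodC +
      (z^2*((α:ℂ)^2+(β:ℂ)^2) + (α:ℂ)^2*(β:ℂ)^2*(1 - I^2)) * hI
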